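/- Let x₀ > 0 and N ∈ ℕ*. The function η(x) = 1 − ((x−x₀)/(x+x₀))^{2N}, defined for x > 0, satisfies η(x₀)=1, η^{(k)}(x₀)=0 for 1 ≤ k ≤ 2N−1, |η(x)| < 1 for all x > 0 with x ≠ x₀, and η^{(2N)}(x₀) = −(2N)!/(2x₀)^{2N} < 0. -/

import Mathlib

open Set

lemma iDW_eq_iD {f : ℝ → ℝ} {s : Set ℝ} {x : ℝ} (n : ℕ) (hs : IsOpen s) (hx : x ∈ s) :
    iteratedDerivWithin n f s x = iteratedDeriv n f x := by
  simp [iteratedDerivWithin_eq_iteratedFDerivWithin, iteratedDeriv_eq_iteratedFDeriv,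
    iteratedFDerivWithin_of_isOpen n hs hx]

lemma key (x₀ : ℝ) (U : Set ℝ) (hU : IsOpen U) (n : ℕ)
    (g : ℝ → ℝ) (hg : ContDiffOn ℝ ⊤ g U) :
    ∀ k, k ≤ n → ∃ h : ℝ → ℝ, ContDiffOn ℝ ⊤ h U ∧ ∀ x ∈ U,
      iteratedDeriv k (fun y => (y - x₀) ^ n * g y) x
        = (x - x₀) ^ (n - k) * ((n.descFactorial k : ℝ) * g x + (x - x₀) * h x) := by
  intro k
  induction k with
  | zero =>
    intro _
    exact ⟨0, contDiffOn_const, fun x hx => by simp⟩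
  | succ k IH =>
    intro hk
    obtain ⟨h, hh, hval⟩ := IH (Nat.le_of_succ_le hk)
    set G : ℝ → ℝ := fun x => (n.descFactorial k : ℝ) * g x + (x - x₀) * h x with hG
    have hGc : ContDiffOn ℝ ⊤ G U := by
      exact (contDiffOn_const.mul hg).add (((contDiffOn_id.sub contDiffOn_const)).mul hh)
    have hG' : ContDiffOn ℝ ⊤ (deriv G) U := hGc.deriv_of_isOpen hU le_top
    refine ⟨fun x => ((n - k : ℕ) : ℝ) * h x + deriv G x, (contDiffOn_const.mul hh).add hG', ?_⟩
    intro x hx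
    have hmem : U ∈ nhds x := hU.mem_nhds hx
    have hev : iteratedDeriv k (fun y => (y - x₀) ^ n * g y)
        =ᶠ[nhds x] fun y => (y - x₀) ^ (n - k) * G y := by
      filter_upwards [hmem] with y hy using hval y hy
    have hGd : DifferentiableAt ℝ G x :=
      (hGc.differentiableOn (by simp)).differentiableAt hmem
    have hpow : HasDerivAt (fun y : ℝ => (y - x₀) ^ (n - k))
        (((n - k : ℕ) : ℝ) * (x - x₀) ^ (n - k - 1) * 1) x :=
      ((hasDerivAt_id x).sub_const x₀).pow (n - k)
    have hprod : HasDerivAt (fun y => (y - x₀) ^ (n - k) * G y)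
        ((((n - k : ℕ) : ℝ) * (x - x₀) ^ (n - k - 1) * 1) * G x
          + (x - x₀) ^ (n - k) * deriv G x) x :=
      hpow.mul hGd.hasDerivAt
    have hstep : iteratedDeriv (k + 1) (fun y => (y - x₀) ^ n * g y) x
        = (((n - k : ℕ) : ℝ) * (x - x₀) ^ (n - k - 1) * 1) * G x
          + (x - x₀) ^ (n - k) * deriv G x := by
      rw [iteratedDeriv_succ, hev.deriv_eq, hprod.deriv]
    rw [hstep]
    have h1 : n - k = (n - (k + 1)) + 1 := by omega
    have h2 : n - k - 1 = n - (k + 1) := by omega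
    have h3 : (n.descFactorial (k + 1) : ℝ) = ((n - k : ℕ) : ℝ) * (n.descFactorial k : ℝ) := by
      rw [← Nat.cast_mul, Nat.descFactorial_succ]
    rw [h2, hG]
    rw [h3, h1, pow_succ]
    ring

theorem stmt3 (N : ℕ) (hN : 0 < N) (x₀ : ℝ) (hx₀ : 0 < x₀)
    (η : ℝ → ℝ) (hη : ∀ x, η x = 1 - ((x - x₀) / (x + x₀)) ^ (2 * N)) :
    η x₀ = 1 ∧
    (∀ k, 1 ≤ k → k ≤ 2 * N - 1 → iteratedDerivWithin k η (Set.Ioi 0) x₀ = 0) ∧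
    (∀ x : ℝ, 0 < x → x ≠ x₀ → |η x| < 1) ∧
    iteratedDerivWithin (2 * N) η (Set.Ioi 0) x₀ =
      -(Nat.factorial (2 * N) : ℝ) / (2 * x₀) ^ (2 * N) ∧
    iteratedDerivWithin (2 * N) η (Set.Ioi 0) x₀ < 0 := by
  have hNpos : 0 < 2 * N := by omega
  have hx₀s : x₀ ∈ Set.Ioi (0:ℝ) := hx₀
  have hsopen : IsOpen (Set.Ioi (0:ℝ)) := isOpen_Ioi
  have hud : UniqueDiffOn ℝ (Set.Ioi (0:ℝ)) := hsopen.uniqueDiffOn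
  set g : ℝ → ℝ := fun x => ((x + x₀) ^ (2 * N))⁻¹ with hgdef
  have hηF : η = fun x => 1 - (x - x₀) ^ (2 * N) * g x := by
    funext x
    rw [hη, div_pow, div_eq_mul_inv]
  have hgc : ContDiffOn ℝ ⊤ g (Set.Ioi 0) := by
    refine ContDiffOn.inv ((contDiffOn_id.add contDiffOn_const).pow _) ?_
    intro x hx
    exact pow_ne_zero _ (by simp only [Set.mem_Ioi] at hx; positivity)
  -- reduce iteratedDerivWithin of η to iteratedDeriv of F
  have hred : ∀ k, 0 < k → iteratedDerivWithin k η (Set.Ioi 0) x₀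
      = -iteratedDeriv k (fun y => (y - x₀) ^ (2 * N) * g y) x₀ := by
    intro k hk
    rw [hηF, iteratedDerivWithin_const_sub hk,
      iteratedDerivWithin_fun_neg, iDW_eq_iD k hsopen hx₀s]
  constructor
  · rw [hη]; simp [hN.ne']
  refine ⟨?_, ?_, ?_⟩
  · intro k hk1 hk2
    obtain ⟨h, hh, hval⟩ := key x₀ (Set.Ioi 0) hsopen (2 * N) g hgc k (by omega)
    rw [hred k hk1, hval x₀ hx₀s, sub_self, zero_pow (by omega : 2 * N - k ≠ 0)]
    ring
  · intro x hx hxne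
    rw [hη]
    have hu1 : |(x - x₀) / (x + x₀)| < 1 := by
      rw [abs_div, div_lt_one (by rw [abs_of_pos (by linarith)]; linarith)]
      rw [abs_of_pos (by linarith : (0:ℝ) < x + x₀)]
      rw [abs_lt]; constructor <;> linarith
    have hu0 : (x - x₀) / (x + x₀) ≠ 0 :=
      div_ne_zero (sub_ne_zero.mpr hxne) (by linarith)
    have hp1 : ((x - x₀) / (x + x₀)) ^ (2 * N) < 1 := by
      calc ((x - x₀) / (x + x₀)) ^ (2 * N) ≤ |((x - x₀) / (x + x₀)) ^ (2 * N)| := le_abs_self _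
        _ = |(x - x₀) / (x + x₀)| ^ (2 * N) := abs_pow _ _
        _ < 1 := pow_lt_one₀ (abs_nonneg _) hu1 (by omega)
    have hp0 : 0 < ((x - x₀) / (x + x₀)) ^ (2 * N) :=
      (even_two_mul N).pow_pos hu0
    rw [abs_lt]; constructor <;> nlinarith
  · obtain ⟨h, hh, hval⟩ := key x₀ (Set.Ioi 0) hsopen (2 * N) g hgc (2 * N) le_rfl
    have : iteratedDerivWithin (2 * N) η (Set.Ioi 0) x₀ =
        -(Nat.factorial (2 * N) : ℝ) / (2 * x₀) ^ (2 * N) := by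
      rw [hred (2 * N) hNpos, hval x₀ hx₀s]
      simp only [sub_self, Nat.sub_self, pow_zero, Nat.descFactorial_self, hgdef]
      have h2 : x₀ + x₀ = 2 * x₀ := by ring
      rw [h2]
      field_simp
      ring
    refine ⟨this, ?_⟩
    rw [this]
    apply div_neg_of_neg_of_pos
    · simp [Nat.factorial_pos]
    · positivity
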